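/- Let X be a real Banach space whose dual space X* is strictly convex. Then every closed nonempty subset K of X satisfying limsup_{‖y‖→0} (d_K(x+y) − d_K(x))/‖y‖ = 1 for all x ∈ X \ K is convex. -/

import Mathlib

open Filter Topology

open Metric in
private lemma aux_ball {X : Type*} [NormedAddCommGroup X] [NormedSpace ℝ X]
    (φ : X →L[ℝ] ℝ) (c : X) {r M : ℝ} (hr : 0 < r)
    (h : ∀ w ∈ Metric.ball c r, φ w ≤ M) : φ c + r * ‖φ‖ ≤ M := by
  have hcb : ∀ w ∈ Metric.closedBall c r, φ w ≤ M := by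
    intro w hw
    have hsub : Metric.closedBall c r ⊆ {w | φ w ≤ M} := by
      rw [← closure_ball c hr.ne']
      exact closure_minimal h (isClosed_le φ.continuous continuous_const)
    exact hsub hw
  have hc : φ c ≤ M := hcb c (Metric.mem_closedBall_self hr.le)
  have hnorm : ‖φ‖ ≤ (M - φ c) / r := by
    apply ContinuousLinearMap.opNorm_le_bound _ (div_nonneg (by linarith) hr.le)
    intro v
    rcases eq_or_ne v 0 with rfl | hv
    · simp
    have hv' : 0 < ‖v‖ := norm_pos_iff.2 hv
    have key : ∀ u : X, ‖u‖ = ‖v‖ → φ u ≤ (M - φ c) / r * ‖v‖ := by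
      intro u hu
      have hmem : c + (r / ‖v‖) • u ∈ Metric.closedBall c r := by
        rw [Metric.mem_closedBall, dist_self_add_left, norm_smul, Real.norm_eq_abs,
          abs_of_nonneg (by positivity), hu, div_mul_cancel₀ _ hv'.ne']
      have := hcb _ hmem
      rw [map_add, map_smul, smul_eq_mul] at this
      rw [div_mul_eq_mul_div] at this
      have h2 : r * φ u / ‖v‖ ≤ M - φ c := by linarith
      have h3 : r * φ u ≤ (M - φ c) * ‖v‖ := by
        have := mul_le_mul_of_nonneg_right h2 hv'.le
        rwa [div_mul_cancel₀ _ hv'.ne'] at this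
      rw [div_mul_eq_mul_div, le_div_iff₀ hr]
      linarith
    rw [Real.norm_eq_abs, abs_le]
    constructor
    · have := key (-v) (by simp)
      rw [map_neg] at this; linarith
    · exact key v rfl
  have : r * ‖φ‖ ≤ r * ((M - φ c) / r) := by
    apply mul_le_mul_of_nonneg_left hnorm hr.le
  rw [mul_div_cancel₀ _ hr.ne'] at this
  linarith

open Metric in
private lemma aux_norm_smul {X : Type*} [NormedAddCommGroup X] [NormedSpace ℝ X]
    (c : ℝ) (f : X →L[ℝ] ℝ) : ‖c • f‖ = |c| * ‖f‖ := by
  rcases eq_or_ne c 0 with rfl | hc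
  · simp
  apply le_antisymm
  · have := ContinuousLinearMap.opNorm_smul_le c f
    rwa [Real.norm_eq_abs] at this
  · have h1 : f = c⁻¹ • (c • f) := by rw [smul_smul, inv_mul_cancel₀ hc, one_smul]
    have h2 := ContinuousLinearMap.opNorm_smul_le c⁻¹ (c • f)
    rw [← h1, norm_inv, Real.norm_eq_abs] at h2
    have hc' : 0 < |c| := abs_pos.2 hc
    calc |c| * ‖f‖ ≤ |c| * (|c|⁻¹ * ‖c • f‖) := mul_le_mul_of_nonneg_left h2 hc'.le
      _ = ‖c • f‖ := by field_simp

open Metric in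
private lemma aux_key {X : Type*} [NormedAddCommGroup X] [NormedSpace ℝ X] [CompleteSpace X]
    (K : Set X) (hKc : IsClosed K) (hKne : K.Nonempty)
    (hA : ∀ x ∉ K, ∀ ε : ℝ, 0 < ε → ∀ δ : ℝ, 0 < δ →
      ∃ y : X, y ≠ 0 ∧ ‖y‖ < δ ∧
        Metric.infDist x K + (1 - ε) * ‖y‖ ≤ Metric.infDist (x + y) K)
    (x : X) (hx : x ∉ K) (ε : ℝ) (hε : 0 < ε) (hε1 : ε < 1) (R : ℝ) (hR : 0 < R) :
    ∃ z : X, ‖z - x‖ ≤ R ∧ Metric.infDist x K + (1 - ε) * R ≤ Metric.infDist z K := by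
  set γ := 1 - ε with hγdef
  have hγ0 : 0 < γ := by rw [hγdef]; linarith
  have hnext : ∀ p : X × ℝ, ∃ y : X,
      Metric.infDist p.1 K + γ * ‖y‖ ≤ Metric.infDist (p.1 + y) K ∧
      ‖y‖ ≤ max (R - p.2) 0 ∧
      ∀ t : ℝ, (t ≤ R - p.2 ∧ ∃ u : X, ‖u‖ = t ∧
        Metric.infDist p.1 K + γ * t ≤ Metric.infDist (p.1 + u) K) → t ≤ 2 * ‖y‖ := by
    intro p
    set T : Set ℝ := {t : ℝ | t ≤ R - p.2 ∧ ∃ u : X, ‖u‖ = t ∧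
        Metric.infDist p.1 K + γ * t ≤ Metric.infDist (p.1 + u) K} with hT
    by_cases hpos : ∃ t ∈ T, 0 < t
    · obtain ⟨t₀, ht₀T, ht₀⟩ := hpos
      have hbdd : BddAbove T := ⟨max (R - p.2) 0, fun t ht => le_max_of_le_left ht.1⟩
      have hs0 : 0 < sSup T := lt_of_lt_of_le ht₀ (le_csSup hbdd ht₀T)
      obtain ⟨t, htT, hts⟩ := exists_lt_of_lt_csSup ⟨t₀, ht₀T⟩ (half_lt_self hs0)
      obtain ⟨ht1, u, hu, hu2⟩ := htT
      refine ⟨u, by rwa [hu], ?_, ?_⟩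
      · rw [hu]; exact le_max_of_le_left ht1
      · intro t' ht'
        have h1 : t' ≤ sSup T := le_csSup hbdd ht'
        rw [hu]; linarith
    · push_neg at hpos
      refine ⟨0, by simp, by simp, ?_⟩
      intro t ht
      have := hpos t ht
      simpa using this
  choose Y hY1 hY2 hY3 using hnext
  set step : X × ℝ → X × ℝ := fun p => (p.1 + Y p, p.2 + ‖Y p‖) with hstepdef
  set st : ℕ → X × ℝ := fun n => step^[n] (x, 0) with hstdef
  have st0 : st 0 = (x, 0) := rfl
  have stS : ∀ n, st (n+1) = step (st n) := fun n => Function.iterate_succ_apply' step n (x, 0)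
  have hstep1 : ∀ n, (st n).2 ≤ (st (n+1)).2 ∧
      ‖(st (n+1)).1 - (st n).1‖ ≤ (st (n+1)).2 - (st n).2 ∧
      Metric.infDist (st n).1 K + γ * ((st (n+1)).2 - (st n).2) ≤
        Metric.infDist (st (n+1)).1 K := by
    intro n
    rw [stS n]
    refine ⟨le_add_of_nonneg_right (norm_nonneg _), ?_, ?_⟩
    · simp [hstepdef]
    · simpa [hstepdef] using hY1 (st n)
  have hℓR : ∀ n, (st n).2 ≤ R := by
    intro n
    induction n with
    | zero => rw [st0]; exact hR.le
    | succ n ih =>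
      have h2 := hY2 (st n)
      have h3 : max (R - (st n).2) 0 = R - (st n).2 := max_eq_left (by linarith)
      rw [h3] at h2
      rw [stS n]
      have h5 : (step (st n)).2 = (st n).2 + ‖Y (st n)‖ := rfl
      rw [h5]
      linarith
  have hchain : ∀ n m, n ≤ m → (st n).2 ≤ (st m).2 ∧
      ‖(st m).1 - (st n).1‖ ≤ (st m).2 - (st n).2 ∧
      Metric.infDist (st n).1 K + γ * ((st m).2 - (st n).2) ≤ Metric.infDist (st m).1 K := by
    intro n m hnm
    induction m, hnm using Nat.le_induction with
    | base => refine ⟨le_refl _, by simp, by simp⟩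
    | succ m hnm ih =>
      obtain ⟨i1, i2, i3⟩ := ih
      obtain ⟨j1, j2, j3⟩ := hstep1 m
      refine ⟨by linarith, ?_, ?_⟩
      · have tri : ‖(st (m+1)).1 - (st n).1‖ ≤ ‖(st (m+1)).1 - (st m).1‖ + ‖(st m).1 - (st n).1‖ :=
          norm_sub_le_norm_sub_add_norm_sub _ _ _
        linarith
      · have hr : γ * ((st (m+1)).2 - (st n).2)
            = γ * ((st (m+1)).2 - (st m).2) + γ * ((st m).2 - (st n).2) := by ring
        linarith
  have hmono : Monotone (fun n => (st n).2) := monotone_nat_of_le_succ (fun n => (hstep1 n).1)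
  have hbdd : BddAbove (Set.range fun n => (st n).2) := ⟨R, by rintro _ ⟨n, rfl⟩; exact hℓR n⟩
  set L := ⨆ n, (st n).2 with hLdef
  have hℓL : ∀ n, (st n).2 ≤ L := fun n => le_ciSup hbdd n
  have hLR : L ≤ R := ciSup_le hℓR
  have hL0 : 0 ≤ L := by have := hℓL 0; rw [st0] at this; exact this
  have htL : Tendsto (fun n => (st n).2) atTop (𝓝 L) := tendsto_atTop_ciSup hmono hbdd
  have hb : ∀ n m N : ℕ, N ≤ n → N ≤ m → dist (st n).1 (st m).1 ≤ L - (st N).2 := by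
    intro n m N hn hm
    rcases le_total n m with h | h
    · have := (hchain n m h).2.1
      rw [dist_eq_norm']
      have h4 : (st N).2 ≤ (st n).2 := hmono hn
      have h5 := hℓL m
      linarith
    · have := (hchain m n h).2.1
      rw [dist_eq_norm]
      have h4 : (st N).2 ≤ (st m).2 := hmono hm
      have h5 := hℓL n
      linarith
  have hcauchy : CauchySeq (fun n => (st n).1) :=
    cauchySeq_of_le_tendsto_0 (fun n => L - (st n).2) hb
      (by
        have h6 : Tendsto (fun n => L - (st n).2) atTop (𝓝 (L - L)) :=
          tendsto_const_nhds.sub htL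
        simpa using h6)
  obtain ⟨zl, hzl⟩ := cauchySeq_tendsto_of_complete hcauchy
  have hdist : ∀ n, ‖zl - (st n).1‖ ≤ L - (st n).2 := by
    intro n
    have h1 : Tendsto (fun m => ‖(st m).1 - (st n).1‖) atTop (𝓝 ‖zl - (st n).1‖) :=
      ((hzl.sub tendsto_const_nhds).norm)
    apply le_of_tendsto h1
    filter_upwards [eventually_ge_atTop n] with m hm
    have := (hchain n m hm).2.1
    have h5 := hℓL m
    linarith
  have hinf : ∀ n, Metric.infDist (st n).1 K + γ * (L - (st n).2) ≤ Metric.infDist zl K := by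
    intro n
    have h1 : Tendsto (fun m => Metric.infDist (st m).1 K) atTop (𝓝 (Metric.infDist zl K)) :=
      ((Metric.continuous_infDist_pt K).tendsto zl).comp hzl
    have h2 : Tendsto (fun m => Metric.infDist (st n).1 K + γ * ((st m).2 - (st n).2)) atTop
        (𝓝 (Metric.infDist (st n).1 K + γ * (L - (st n).2))) :=
      tendsto_const_nhds.add ((htL.sub tendsto_const_nhds).const_mul γ)
    apply le_of_tendsto_of_tendsto h2 h1
    filter_upwards [eventually_ge_atTop n] with m hm
    exact (hchain n m hm).2.2
  have hdx : 0 < Metric.infDist x K := (hKc.notMem_iff_infDist_pos hKne).1 hx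
  have hinf0 : Metric.infDist x K + γ * L ≤ Metric.infDist zl K := by
    have := hinf 0; rw [st0] at this; simpa using this
  rcases eq_or_lt_of_le hLR with hLReq | hLRlt
  · refine ⟨zl, ?_, ?_⟩
    · have := hdist 0; rw [st0] at this; simp only [sub_zero] at this
      rw [← hLReq]; exact this
    · rw [← hLReq]; exact hinf0
  · exfalso
    have hzlK : zl ∉ K := by
      intro hmem
      have h0 : Metric.infDist zl K = 0 := Metric.infDist_zero_of_mem hmem
      have h1 : 0 ≤ γ * L := mul_nonneg hγ0.le hL0
      linarith
    obtain ⟨y, hy0, hyδ, hyd⟩ := hA zl hzlK ε hε ((R - L)/2) (by linarith)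
    have hy : 0 < ‖y‖ := norm_pos_iff.2 hy0
    have hev : ∀ᶠ n in atTop, L - ‖y‖/8 < (st n).2 :=
      htL.eventually (eventually_gt_nhds (by linarith))
    obtain ⟨N, hN⟩ := hev.exists
    have hN8 : L - (st N).2 < ‖y‖/8 := by linarith
    set y' := (zl - (st N).1) + y with hy'def
    have hrw : (st N).1 + y' = zl + y := by rw [hy'def]; abel
    have hd1 : ‖zl - (st N).1‖ ≤ L - (st N).2 := hdist N
    have hy'le : ‖y'‖ ≤ (L - (st N).2) + ‖y‖ := by
      have := norm_add_le (zl - (st N).1) y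
      rw [← hy'def] at this
      linarith
    have hy'ge : ‖y‖ - (L - (st N).2) ≤ ‖y'‖ := by
      have h7 : ‖y‖ = ‖y' - (zl - (st N).1)‖ := by rw [hy'def]; congr 1; abel
      have h8 : ‖y' - (zl - (st N).1)‖ ≤ ‖y'‖ + ‖zl - (st N).1‖ := norm_sub_le _ _
      linarith
    have hcand : ‖y'‖ ≤ R - (st N).2 ∧ ∃ u : X, ‖u‖ = ‖y'‖ ∧
        Metric.infDist (st N).1 K + γ * ‖y'‖ ≤ Metric.infDist ((st N).1 + u) K := by
      constructor
      · have h9 : (st N).2 ≤ L := hℓL N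
        linarith
      · refine ⟨y', rfl, ?_⟩
        rw [hrw]
        have c1 := hinf N
        have c2 := hyd
        rw [← hγdef] at c2
        have c3 : γ * ‖y'‖ ≤ γ * ((L - (st N).2) + ‖y‖) :=
          mul_le_mul_of_nonneg_left hy'le hγ0.le
        have c4 : γ * ((L - (st N).2) + ‖y‖) = γ * (L - (st N).2) + γ * ‖y‖ := by ring
        linarith
    have ht' := hY3 (st N) ‖y'‖ hcand
    have hYN : ‖Y (st N)‖ = (st (N+1)).2 - (st N).2 := by
      rw [stS N]; simp [hstepdef]
    have h2 : (st (N+1)).2 ≤ L := hℓL (N+1)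
    rw [hYN] at ht'
    linarith

set_option maxHeartbeats 1000000

/-- If the dual space `X*` of a real Banach space `X` is strictly convex (i.e.
`‖f + g‖ < ‖f‖ + ‖g‖` whenever the functionals `f` and `g` are not multiples of
one another), then every closed nonempty subset `K` of `X` satisfying
`limsup_{‖y‖→0} (d_K(x+y) - d_K(x))/‖y‖ = 1` for all `x ∈ X \ K` is convex. -/
theorem convex_of_limsup_eq_one {X : Type*} [NormedAddCommGroup X] [NormedSpace ℝ X]
    [CompleteSpace X]
    (hsc : ∀ f g : X →L[ℝ] ℝ, ¬ (∃ c : ℝ, f = c • g ∨ g = c • f) → ‖f + g‖ < ‖f‖ + ‖g‖)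
    (K : Set X) (hKc : IsClosed K) (hKne : K.Nonempty)
    (hK : ∀ x ∉ K, limsup
      (fun y : X => (Metric.infDist (x + y) K - Metric.infDist x K) / ‖y‖)
      (𝓝[≠] (0 : X)) = 1) :
    Convex ℝ K := by
  intro a ha b hb s t hs ht hst
  rcases eq_or_lt_of_le hs with hs0 | hs0
  · have ht1 : t = 1 := by linarith
    rw [← hs0, ht1]; simpa using hb
  rcases eq_or_lt_of_le ht with ht0 | ht0
  · have hs1 : s = 1 := by linarith
    rw [← ht0, hs1]; simpa using ha
  by_contra hxK'
  obtain ⟨x, hxdef⟩ : ∃ x : X, x = s • a + t • b := ⟨_, rfl⟩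
  have hxK : x ∉ K := by rw [hxdef]; exact hxK'
  have hax : a ≠ x := fun h => hxK (h ▸ ha)
  haveI : Nontrivial X := ⟨⟨a, x, hax⟩⟩
  -- Step A : frequently increase
  have hA : ∀ z ∉ K, ∀ ε : ℝ, 0 < ε → ∀ δ : ℝ, 0 < δ →
      ∃ y : X, y ≠ 0 ∧ ‖y‖ < δ ∧
        Metric.infDist z K + (1 - ε) * ‖y‖ ≤ Metric.infDist (z + y) K := by
    intro z hz ε hε δ hδ
    have hlim := hK z hz
    have hbd : IsBoundedUnder (· ≥ ·) (𝓝[≠] (0 : X))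
        (fun y => (Metric.infDist (z + y) K - Metric.infDist z K) / ‖y‖) := by
      refine ⟨-1, eventually_map.2 ?_⟩
      filter_upwards [self_mem_nhdsWithin] with y hy
      have hy0 : y ≠ 0 := hy
      have hy' : 0 < ‖y‖ := norm_pos_iff.2 hy0
      have hlip : Metric.infDist z K ≤ Metric.infDist (z + y) K + dist z (z + y) :=
        Metric.infDist_le_infDist_add_dist
      have hdist : dist z (z + y) = ‖y‖ := by
        simp [dist_eq_norm]
      rw [hdist] at hlip
      simp only [ge_iff_le]
      rw [le_div_iff₀ hy']
      linarith
    have hfreq : ∃ᶠ y in 𝓝[≠] (0 : X),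
        1 - ε < (Metric.infDist (z + y) K - Metric.infDist z K) / ‖y‖ :=
      frequently_lt_of_lt_limsup hbd.isCoboundedUnder_le (by rw [hlim]; linarith)
    have hev : ∀ᶠ y in 𝓝[≠] (0 : X), ‖y‖ < δ ∧ y ≠ 0 := by
      have h1 : ∀ᶠ y in 𝓝 (0 : X), ‖y‖ < δ := by
        filter_upwards [Metric.ball_mem_nhds (0 : X) hδ] with y hy
        simpa [dist_zero_right] using hy
      exact (eventually_nhdsWithin_of_eventually_nhds h1).and
        (by filter_upwards [self_mem_nhdsWithin] with y hy; exact hy)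
    obtain ⟨y, hy1, hy2, hy3⟩ := (hfreq.and_eventually hev).exists
    refine ⟨y, hy3, hy2, ?_⟩
    have hy' : 0 < ‖y‖ := norm_pos_iff.2 hy3
    rw [lt_div_iff₀ hy'] at hy1
    linarith
  obtain ⟨d, hddef⟩ : ∃ d : ℝ, d = Metric.infDist x K := ⟨_, rfl⟩
  have hdx : 0 < d := by
    rw [hddef]; exact (hKc.notMem_iff_infDist_pos hKne).1 hxK
  obtain ⟨μ, hμ0, hμ2, hμd⟩ : ∃ μ : ℝ, 0 < μ ∧ μ ≤ 1/2 ∧ μ ≤ d/8 :=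
    ⟨min (d/8) (1/2), lt_min (by linarith) (by norm_num), min_le_right _ _, min_le_left _ _⟩
  have hpowle : ∀ n : ℕ, ((1:ℝ)/2) ^ n ≤ 1 := fun n =>
    pow_le_one₀ (by norm_num) (by norm_num)
  have hpow0 : ∀ n : ℕ, (0:ℝ) < (1/2) ^ n := fun n => by positivity
  have hstep : ∀ z, z ∉ K → ∀ n : ℕ, ∃ z' : X, ‖z' - z‖ ≤ 1 ∧
      Metric.infDist z K + (1 - μ * (1/2) ^ n) * 1 ≤ Metric.infDist z' K := by
    intro z hz n
    have hε1 : μ * (1/2) ^ n < 1 := by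
      have h1 : μ * (1/2) ^ n ≤ (1/2) * 1 :=
        mul_le_mul hμ2 (hpowle n) (hpow0 n).le (by norm_num)
      linarith
    exact aux_key K hKc hKne hA z hz (μ * (1/2) ^ n) (by positivity) hε1 1 one_pos
  classical
  obtain ⟨w, w0, hwstep'⟩ : ∃ w : ℕ → X, w 0 = x ∧ ∀ n, w n ∉ K →
      ‖w (n + 1) - w n‖ ≤ 1 ∧
        Metric.infDist (w n) K + (1 - μ * (1/2) ^ n) * 1 ≤ Metric.infDist (w (n + 1)) K := by
    refine ⟨fun n => Nat.rec x
      (fun k zk => if hz : zk ∉ K then Classical.choose (hstep zk hz k) else zk) n, rfl, ?_⟩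
    intro n hn
    show ‖(if hz : _ ∉ K then Classical.choose (hstep _ hz n) else _) - _‖ ≤ 1 ∧ _ +
      _ ≤ Metric.infDist (if hz : _ ∉ K then Classical.choose (hstep _ hz n) else _) K
    rw [dif_pos hn]
    exact Classical.choose_spec (hstep _ hn n)
  obtain ⟨S, hS00, hS0, hS1, hSn, hSsucc⟩ :
      ∃ S : ℕ → ℝ, S 0 = 0 ∧ (∀ n, 0 ≤ S n) ∧ (∀ n, S n ≤ 1) ∧ (∀ n : ℕ, S n ≤ n) ∧
        (∀ n, S (n + 1) = S n + μ * (1/2) ^ n) := by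
    refine ⟨fun n => μ * ∑ k ∈ Finset.range n, ((1:ℝ)/2) ^ k, by simp, ?_, ?_, ?_, ?_⟩
    · intro n
      apply mul_nonneg hμ0.le
      apply Finset.sum_nonneg
      intro k _; positivity
    · intro n
      have h2 := sum_geometric_two_le n
      have h3 : μ * (∑ k ∈ Finset.range n, ((1:ℝ)/2) ^ k) ≤ μ * 2 :=
        mul_le_mul_of_nonneg_left h2 hμ0.le
      have : μ * 2 ≤ 1 := by linarith
      linarith
    · intro n
      match n with
      | 0 => simp
      | (m+1) =>
        have h2 := sum_geometric_two_le (m+1)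
        have h3 : μ * (∑ k ∈ Finset.range (m+1), ((1:ℝ)/2) ^ k) ≤ μ * 2 :=
          mul_le_mul_of_nonneg_left h2 hμ0.le
        have h4 : (1:ℝ) ≤ ((m+1:ℕ) : ℝ) := by
          have := Nat.succ_le_succ (Nat.zero_le m)
          exact_mod_cast this
        have : μ * 2 ≤ 1 := by linarith
        linarith
    · intro n
      simp [Finset.sum_range_succ, mul_add]
  -- main invariant
  have hw : ∀ n : ℕ, d + (n - S n) ≤ Metric.infDist (w n) K := by
    intro n
    induction n with
    | zero => rw [w0, hS00, hddef]; simp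
    | succ n ih =>
      have hwnK : w n ∉ K := by
        intro hmem
        have h0 : Metric.infDist (w n) K = 0 := Metric.infDist_zero_of_mem hmem
        have := hSn n
        linarith
      have hspec := (hwstep' n hwnK).2
      have e := hSsucc n
      have e2 : (1 - μ * (1/2) ^ n) * 1 = 1 - μ * (1/2) ^ n := mul_one _
      push_cast
      linarith
  have hwK : ∀ n, w n ∉ K := by
    intro n hmem
    have h0 : Metric.infDist (w n) K = 0 := Metric.infDist_zero_of_mem hmem
    have := hw n
    have := hSn n
    linarith
  have hwstep : ∀ n, ‖w (n + 1) - w n‖ ≤ 1 ∧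
      Metric.infDist (w n) K + (1 - μ * (1/2) ^ n) ≤ Metric.infDist (w (n + 1)) K := by
    intro n
    have h := hwstep' n (hwK n)
    have e2 : (1 - μ * (1/2) ^ n) * 1 = 1 - μ * (1/2) ^ n := mul_one _
    exact ⟨h.1, by linarith [h.2]⟩
  have hwx : ∀ n : ℕ, ‖w n - x‖ ≤ n := by
    intro n
    induction n with
    | zero => simp [w0]
    | succ n ih =>
      have h1 : ‖w (n+1) - x‖ ≤ ‖w (n+1) - w n‖ + ‖w n - x‖ :=
        norm_sub_le_norm_sub_add_norm_sub _ _ _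
      have h2 := (hwstep n).1
      push_cast
      linarith
  obtain ⟨δn, hδ00, hδpos, hδle, hδdiff⟩ :
      ∃ δn : ℕ → ℝ, δn 0 = d / 2 ∧ (∀ n, 0 < δn n) ∧ (∀ n, δn n ≤ d / 2) ∧
        (∀ n, δn n - δn (n + 1) = d / 8 * (1/2) ^ n) := by
    have h00 : d / 4 + d / 4 * ((1:ℝ)/2) ^ 0 = d / 2 := by rw [pow_zero, mul_one]; ring
    refine ⟨fun n => d / 4 + d / 4 * (1/2) ^ n, h00, ?_, ?_, ?_⟩
    · intro n
      have := hpow0 n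
      show 0 < d / 4 + d / 4 * (1/2) ^ n
      nlinarith
    · intro n
      have h1 : d / 4 * (1/2 : ℝ) ^ n ≤ d / 4 * 1 :=
        mul_le_mul_of_nonneg_left (hpowle n) (by linarith)
      show d / 4 + d / 4 * (1/2) ^ n ≤ d / 2
      linarith
    · intro n
      show d / 4 + d / 4 * (1/2) ^ n - (d / 4 + d / 4 * (1/2) ^ (n+1)) = d / 8 * (1/2) ^ n
      simp only [pow_succ]
      ring
  have hrpos : ∀ n, 0 < Metric.infDist (w n) K - δn n := by
    intro n
    have h1 := hw n
    have h2 := hδle n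
    have h3 := hSn n
    linarith
  -- nested balls
  have hball : ∀ n, Metric.ball (w n) (Metric.infDist (w n) K - δn n) ⊆
      Metric.ball (w (n+1)) (Metric.infDist (w (n+1)) K - δn (n+1)) := by
    intro n u hu
    rw [Metric.mem_ball] at hu ⊢
    have h1 : dist u (w (n+1)) ≤ dist u (w n) + dist (w n) (w (n+1)) := dist_triangle _ _ _
    have h2 : dist (w n) (w (n+1)) = ‖w (n+1) - w n‖ := by rw [dist_eq_norm']
    have h3 := (hwstep n).1
    have h4 := (hwstep n).2
    have h5 : δn n - δn (n+1) = d / 8 * (1/2) ^ n := hδdiff n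
    have h6 : μ * (1/2) ^ n ≤ d / 8 * (1/2) ^ n :=
      mul_le_mul_of_nonneg_right hμd (hpow0 n).le
    linarith
  have hballmono : ∀ n m : ℕ, n ≤ m →
      Metric.ball (w n) (Metric.infDist (w n) K - δn n) ⊆
      Metric.ball (w m) (Metric.infDist (w m) K - δn m) := by
    intro n m hnm
    induction m, hnm using Nat.le_induction with
    | base => exact subset_rfl
    | succ m hnm ih => exact ih.trans (hball m)
  obtain ⟨C, hCdef⟩ : ∃ C : Set X,
      C = ⋃ n, Metric.ball (w n) (Metric.infDist (w n) K - δn n) := ⟨_, rfl⟩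
  have hCopen : IsOpen C := by
    rw [hCdef]; exact isOpen_iUnion (fun _ => Metric.isOpen_ball)
  have hCconv : Convex ℝ C := by
    intro u hu v hv p q hp hq hpq
    rw [hCdef, Set.mem_iUnion] at hu hv ⊢
    obtain ⟨i, hi⟩ := hu
    obtain ⟨j, hj⟩ := hv
    refine ⟨max i j, ?_⟩
    have hui := hballmono i (max i j) (le_max_left _ _) hi
    have hvj := hballmono j (max i j) (le_max_right _ _) hj
    exact (convex_ball _ _) hui hvj hp hq hpq
  have hxC : x ∈ C := by
    rw [hCdef, Set.mem_iUnion]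
    refine ⟨0, ?_⟩
    rw [w0, Metric.mem_ball, dist_self, hδ00, ← hddef]
    linarith
  have hCK : ∀ u ∈ C, u ∉ K := by
    intro u hu hmem
    rw [hCdef, Set.mem_iUnion] at hu
    obtain ⟨n, hn⟩ := hu
    rw [Metric.mem_ball] at hn
    have h1 : Metric.infDist (w n) K ≤ dist (w n) u := Metric.infDist_le_dist_of_mem hmem
    rw [dist_comm] at h1
    have := hδpos n
    linarith
  have haC : a ∉ C := fun h => hCK a h ha
  have hbC : b ∉ C := fun h => hCK b h hb
  obtain ⟨f, hf⟩ := geometric_hahn_banach_open_point hCconv hCopen haC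
  obtain ⟨g, hg⟩ := geometric_hahn_banach_open_point hCconv hCopen hbC
  have hfne : f ≠ 0 := by
    intro h0
    have := hf x hxC
    rw [h0] at this
    simp at this
  have hgne : g ≠ 0 := by
    intro h0
    have := hg x hxC
    rw [h0] at this
    simp at this
  have hfn : 0 < ‖f‖ := norm_pos_iff.2 hfne
  have hgn : 0 < ‖g‖ := norm_pos_iff.2 hgne
  obtain ⟨f1, hf1def⟩ : ∃ f1 : X →L[ℝ] ℝ, f1 = ‖f‖⁻¹ • f := ⟨_, rfl⟩
  obtain ⟨g1, hg1def⟩ : ∃ g1 : X →L[ℝ] ℝ, g1 = ‖g‖⁻¹ • g := ⟨_, rfl⟩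
  have hf1norm : ‖f1‖ = 1 := by
    rw [hf1def, aux_norm_smul, abs_of_pos (inv_pos.2 hfn), inv_mul_cancel₀ hfn.ne']
  have hg1norm : ‖g1‖ = 1 := by
    rw [hg1def, aux_norm_smul, abs_of_pos (inv_pos.2 hgn), inv_mul_cancel₀ hgn.ne']
  have hf1 : ∀ u ∈ C, f1 u < f1 a := by
    intro u hu
    rw [hf1def]
    simp only [ContinuousLinearMap.smul_apply, smul_eq_mul]
    exact mul_lt_mul_of_pos_left (hf u hu) (inv_pos.2 hfn)
  have hg1 : ∀ u ∈ C, g1 u < g1 b := by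
    intro u hu
    rw [hg1def]
    simp only [ContinuousLinearMap.smul_apply, smul_eq_mul]
    exact mul_lt_mul_of_pos_left (hg u hu) (inv_pos.2 hgn)
  have hfb : ∀ n : ℕ, f1 (w n) + (Metric.infDist (w n) K - δn n) ≤ f1 a := by
    intro n
    have h1 := aux_ball f1 (w n) (hrpos n)
      (fun u hu => (hf1 u (by rw [hCdef]; exact Set.mem_iUnion.2 ⟨n, hu⟩)).le)
    rwa [hf1norm, mul_one] at h1
  have hgb : ∀ n : ℕ, g1 (w n) + (Metric.infDist (w n) K - δn n) ≤ g1 b := by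
    intro n
    have h1 := aux_ball g1 (w n) (hrpos n)
      (fun u hu => (hg1 u (by rw [hCdef]; exact Set.mem_iUnion.2 ⟨n, hu⟩)).le)
    rwa [hg1norm, mul_one] at h1
  -- norm of sum is 2
  have hFnorm : 2 ≤ ‖f1 + g1‖ := by
    by_contra hF2
    push_neg at hF2
    have hkey : ∀ n : ℕ, (2 - ‖f1 + g1‖) * n ≤ (f1 a + g1 b - (f1 x + g1 x)) + 2 - d := by
      intro n
      have h1 : (f1 + g1) (x - w n) ≤ ‖f1 + g1‖ * ‖x - w n‖ :=
        le_trans (le_abs_self _) ((f1 + g1).le_opNorm (x - w n))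
      have h1' : ‖x - w n‖ ≤ n := by
        rw [norm_sub_rev]; exact hwx n
      have h2 : ‖f1 + g1‖ * ‖x - w n‖ ≤ ‖f1 + g1‖ * n :=
        mul_le_mul_of_nonneg_left h1' (norm_nonneg _)
      have h3 : (f1 + g1) (x - w n) = f1 x + g1 x - (f1 (w n) + g1 (w n)) := by
        rw [map_sub, ContinuousLinearMap.add_apply, ContinuousLinearMap.add_apply]
      have h4 := hfb n
      have h5 := hgb n
      have h6 : (n:ℝ) - 1 + d / 2 ≤ Metric.infDist (w n) K - δn n := by
        have := hw n
        have := hδle n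
        have := hS1 n
        linarith
      nlinarith [h1, h2, h3, h4, h5, h6]
    obtain ⟨n, hn⟩ := exists_nat_gt (((f1 a + g1 b - (f1 x + g1 x)) + 2 - d) / (2 - ‖f1 + g1‖))
    have h8 : 0 < 2 - ‖f1 + g1‖ := by linarith
    rw [div_lt_iff₀ h8] at hn
    have := hkey n
    nlinarith
  have hmul : ∃ c : ℝ, f1 = c • g1 ∨ g1 = c • f1 := by
    by_contra hcon
    have := hsc f1 g1 hcon
    rw [hf1norm, hg1norm] at this
    linarith
  have hf1g1 : f1 = g1 := by
    obtain ⟨c, hc | hc⟩ := hmul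
    · have hcn : |c| = 1 := by
        have h9 : ‖f1‖ = |c| * ‖g1‖ := by rw [hc, aux_norm_smul]
        rw [hf1norm, hg1norm, mul_one] at h9
        exact h9.symm
      rcases abs_eq (by norm_num : (0:ℝ) ≤ 1) |>.1 hcn with h1 | h1
      · rw [h1, one_smul] at hc; exact hc
      · exfalso
        rw [h1] at hc
        have hz : f1 + g1 = 0 := by rw [hc]; ext u; simp
        rw [hz, norm_zero] at hFnorm
        linarith
    · have hcn : |c| = 1 := by
        have h9 : ‖g1‖ = |c| * ‖f1‖ := by rw [hc, aux_norm_smul]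
        rw [hf1norm, hg1norm, mul_one] at h9
        exact h9.symm
      rcases abs_eq (by norm_num : (0:ℝ) ≤ 1) |>.1 hcn with h1 | h1
      · rw [h1, one_smul] at hc; exact hc.symm
      · exfalso
        rw [h1] at hc
        have hz : f1 + g1 = 0 := by rw [hc]; ext u; simp
        rw [hz, norm_zero] at hFnorm
        linarith
  -- final contradiction
  have h1 : f1 x < f1 a := hf1 x hxC
  have h2 : f1 x < f1 b := by
    rw [hf1g1]
    exact hg1 x hxC
  have h3 : f1 x = s * f1 a + t * f1 b := by
    rw [hxdef]
    simp
  have h4 : s * f1 x < s * f1 a := mul_lt_mul_of_pos_left h1 hs0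
  have h5 : t * f1 x < t * f1 b := mul_lt_mul_of_pos_left h2 ht0
  have h6 : s * f1 x + t * f1 x = f1 x := by
    rw [← add_mul, hst, one_mul]
  linarith
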